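/- Let ψ(A)=dist²(A, SO(2)) for A a real 2×2 matrix, where SO(2) is the set of 2×2 rotation matrices and dist is with respect to the Frobenius norm. If the quasiconvex envelope ψ^{qc} of ψ satisfies ψ^{qc}(A)=0, then A∈SO(2). -/

import Mathlib

noncomputable section
open Real MeasureTheory Matrix

def SO2 : Set (Matrix (Fin 2) (Fin 2) ℝ) := {R | R * Rᵀ = 1 ∧ R.det = 1}

/-- Frobenius norm of a 2×2 real matrix. -/
def fnorm (A : Matrix (Fin 2) (Fin 2) ℝ) : ℝ :=
  Real.sqrt (∑ i : Fin 2, ∑ j : Fin 2, (A i j) ^ 2)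

/-- Frobenius distance to SO(2). -/
def dSO (A : Matrix (Fin 2) (Fin 2) ℝ) : ℝ := sInf {d : ℝ | ∃ R ∈ SO2, d = fnorm (A - R)}

/-- ψ(A) = dist²(A, SO(2)). -/
def psi (A : Matrix (Fin 2) (Fin 2) ℝ) : ℝ := (dSO A) ^ 2

/-- The gradient of a map ℝ² → ℝ² as a 2×2 matrix. -/
def gradMat (φ : (Fin 2 → ℝ) → (Fin 2 → ℝ)) (x : Fin 2 → ℝ) : Matrix (Fin 2) (Fin 2) ℝ :=
  LinearMap.toMatrix' ((fderiv ℝ φ x : (Fin 2 → ℝ) →L[ℝ] (Fin 2 → ℝ)) :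
    (Fin 2 → ℝ) →ₗ[ℝ] (Fin 2 → ℝ))

/-- The quasiconvex envelope of ψ at A, computed as the infimum of averages of
ψ(A + ∇φ) over Lipschitz maps φ vanishing outside Ω (`W^{1,∞}_0`). -/
def psiQC (Ω : Set (Fin 2 → ℝ)) (A : Matrix (Fin 2) (Fin 2) ℝ) : ℝ :=
  sInf {r : ℝ | ∃ φ : (Fin 2 → ℝ) → (Fin 2 → ℝ),
    (∃ K, LipschitzWith K φ) ∧ (∀ x ∉ Ω, φ x = 0) ∧
    r = ⨍ x in Ω, psi (A + gradMat φ x)}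


open Filter Metric Topology Set
open scoped ENNReal NNReal

set_option linter.unusedSectionVars false
set_option linter.unreachableTactic false
set_option linter.unusedTactic false
set_option maxHeartbeats 1000000

abbrev E2 : Type := Fin 2 → ℝ

def nB (B : Matrix (Fin 2) (Fin 2) ℝ) : ℝ := ∑ i : Fin 2, ∑ j : Fin 2, (B i j) ^ 2

lemma mem_SO2_iff {R : Matrix (Fin 2) (Fin 2) ℝ} :
    R ∈ SO2 ↔ ∃ c s : ℝ, c ^ 2 + s ^ 2 = 1 ∧ R 0 0 = c ∧ R 0 1 = -s ∧ R 1 0 = s ∧ R 1 1 = c := by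
  constructor
  · rintro ⟨h1, h2⟩
    have h00 := congr_fun (congr_fun h1 0) 0
    have h11 := congr_fun (congr_fun h1 1) 1
    simp [Matrix.mul_apply, Fin.sum_univ_two, Matrix.one_apply] at h00 h11
    rw [Matrix.det_fin_two] at h2
    refine ⟨R 0 0, R 1 0, ?_, rfl, ?_, rfl, ?_⟩
    · nlinarith [sq_nonneg (R 0 1 + R 1 0), sq_nonneg (R 0 0 - R 1 1)]
    · nlinarith [sq_nonneg (R 0 1 + R 1 0), sq_nonneg (R 0 0 - R 1 1)]
    · nlinarith [sq_nonneg (R 0 1 + R 1 0), sq_nonneg (R 0 0 - R 1 1)]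
  · rintro ⟨c, s, hcs, e00, e01, e10, e11⟩
    constructor
    · ext i j
      fin_cases i <;> fin_cases j <;>
        simp [Matrix.mul_apply, Fin.sum_univ_two, Matrix.one_apply, e00, e01, e10, e11] <;> nlinarith
    · rw [Matrix.det_fin_two, e00, e01, e10, e11]; nlinarith

lemma nB_nonneg (B : Matrix (Fin 2) (Fin 2) ℝ) : 0 ≤ nB B := by
  refine Finset.sum_nonneg fun i _ => Finset.sum_nonneg fun j _ => sq_nonneg _

lemma nB_add_det (B : Matrix (Fin 2) (Fin 2) ℝ) :
    nB B + 2 * B.det = (B 0 0 + B 1 1) ^ 2 + (B 1 0 - B 0 1) ^ 2 := by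
  rw [Matrix.det_fin_two]
  simp [nB, Fin.sum_univ_two]
  ring

lemma two_det_le_nB (B : Matrix (Fin 2) (Fin 2) ℝ) : 2 * B.det ≤ nB B := by
  rw [Matrix.det_fin_two]
  simp [nB, Fin.sum_univ_two]
  nlinarith [sq_nonneg (B 0 0 - B 1 1), sq_nonneg (B 0 1 + B 1 0)]

lemma psi_eq (B : Matrix (Fin 2) (Fin 2) ℝ) :
    psi B = nB B + 2 - 2 * Real.sqrt (nB B + 2 * B.det) := by
  set p := B 0 0 + B 1 1 with hp
  set q := B 1 0 - B 0 1 with hq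
  have hpq : nB B + 2 * B.det = p ^ 2 + q ^ 2 := nB_add_det B
  set r := Real.sqrt (p ^ 2 + q ^ 2) with hr
  have hr0 : 0 ≤ r := Real.sqrt_nonneg _
  have hr2 : r ^ 2 = p ^ 2 + q ^ 2 := Real.sq_sqrt (by positivity)
  have hX : 0 ≤ nB B + 2 - 2 * r := by
    have hd := two_det_le_nB B
    nlinarith [sq_nonneg (r - 2), hr2, hr0, hpq]
  have key : ∀ c s : ℝ, c ^ 2 + s ^ 2 = 1 →
      ∀ R : Matrix (Fin 2) (Fin 2) ℝ, R 0 0 = c → R 0 1 = -s → R 1 0 = s → R 1 1 = c →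
      fnorm (B - R) = Real.sqrt (nB B + 2 - 2 * (p * c + q * s)) := by
    intro c s hcs R e00 e01 e10 e11
    unfold fnorm
    congr 1
    simp only [Fin.sum_univ_two, Matrix.sub_apply, e00, e01, e10, e11, nB, hp, hq]
    linarith [hcs]
  obtain ⟨c₀, s₀, hcs₀, hach⟩ : ∃ c s : ℝ, c ^ 2 + s ^ 2 = 1 ∧ p * c + q * s = r := by
    rcases eq_or_lt_of_le hr0 with h0 | h0
    · refine ⟨1, 0, by norm_num, ?_⟩
      have hle : p ^ 2 + q ^ 2 ≤ 0 := Real.sqrt_eq_zero'.1 h0.symm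
      have hp0 : p = 0 := by nlinarith [sq_nonneg p, sq_nonneg q]
      have hq0 : q = 0 := by nlinarith [sq_nonneg p, sq_nonneg q]
      simp [hp0, hq0, ← h0]
    · refine ⟨p / r, q / r, ?_, ?_⟩
      · field_simp
        linarith [hr2]
      · field_simp
        linarith [hr2]
  set R₀ : Matrix (Fin 2) (Fin 2) ℝ := Matrix.of ![![c₀, -s₀], ![s₀, c₀]] with hR₀
  have hR₀mem : R₀ ∈ SO2 := mem_SO2_iff.2 ⟨c₀, s₀, hcs₀, rfl, rfl, rfl, rfl⟩
  have hleast : IsLeast {d : ℝ | ∃ R ∈ SO2, d = fnorm (B - R)} (Real.sqrt (nB B + 2 - 2 * r)) := by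
    constructor
    · exact ⟨R₀, hR₀mem, by rw [key c₀ s₀ hcs₀ R₀ rfl rfl rfl rfl, hach]⟩
    · rintro d ⟨R, hR, rfl⟩
      obtain ⟨c, s, hcs, e00, e01, e10, e11⟩ := mem_SO2_iff.1 hR
      rw [key c s hcs R e00 e01 e10 e11]
      apply Real.sqrt_le_sqrt
      have h1 : (p * c + q * s) ^ 2 ≤ r ^ 2 := by
        rw [hr2]; nlinarith [sq_nonneg (p * s - q * c)]
      have hle : p * c + q * s ≤ r := by
        nlinarith [h1, hr0]
      linarith
  have hd : dSO B = Real.sqrt (nB B + 2 - 2 * r) := hleast.csInf_eq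
  rw [psi, hd, Real.sq_sqrt hX, hpq]

lemma nB_add_det_nonneg (B : Matrix (Fin 2) (Fin 2) ℝ) : 0 ≤ nB B + 2 * B.det := by
  rw [nB_add_det]; positivity

lemma psi_ge_conf (B : Matrix (Fin 2) (Fin 2) ℝ) : nB B / 2 - B.det ≤ psi B := by
  rw [psi_eq]
  set r := Real.sqrt (nB B + 2 * B.det) with hr
  have hr0 : 0 ≤ r := Real.sqrt_nonneg _
  have hr2 : r ^ 2 = nB B + 2 * B.det := Real.sq_sqrt (nB_add_det_nonneg B)
  nlinarith [sq_nonneg (r - 2)]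

lemma psi_ge_poly (B : Matrix (Fin 2) (Fin 2) ℝ) {l c s : ℝ} (hl : 0 ≤ l)
    (hcs : c ^ 2 + s ^ 2 = 1) :
    2 * l * ((B 0 0 + B 1 1) * c + (B 1 0 - B 0 1) * s) - 2 * B.det + (1 - 2 * l - l ^ 2)
      ≤ psi B := by
  rw [psi_eq]
  set p := B 0 0 + B 1 1 with hp
  set q := B 1 0 - B 0 1 with hq
  set r := Real.sqrt (nB B + 2 * B.det) with hr
  have hr0 : 0 ≤ r := Real.sqrt_nonneg _
  have hr2 : r ^ 2 = p ^ 2 + q ^ 2 := by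
    rw [hr, Real.sq_sqrt (nB_add_det_nonneg B), nB_add_det]
  have h1 : (p * c + q * s) ^ 2 ≤ r ^ 2 := by
    rw [hr2]; nlinarith [sq_nonneg (p * s - q * c)]
  have hle : p * c + q * s ≤ r := by nlinarith [h1, hr0]
  have hr2' : nB B + 2 * B.det = r ^ 2 := by
    rw [hr2, nB_add_det]
  nlinarith [sq_nonneg (r - 1 - l), mul_nonneg hl (sub_nonneg.2 hle)]

lemma fderiv_ae_zero_on_zeroset {φ : E2 → E2} {Z : Set E2}
    (hZm : MeasurableSet Z) (hZ : ∀ x ∈ Z, φ x = 0) :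
    ∀ᵐ x, x ∈ Z → fderiv ℝ φ x = 0 := by
  have hb := Besicovitch.ae_tendsto_measure_inter_div_of_measurableSet (volume : Measure E2) hZm
  filter_upwards [hb] with x hx hxZ
  by_cases hdiff : DifferentiableAt ℝ φ x
  swap
  · exact fderiv_zero_of_not_differentiableAt hdiff
  set L := fderiv ℝ φ x with hL
  by_contra hL0
  -- find unit vector with L v ≠ 0
  obtain ⟨u, hu⟩ : ∃ u, L u ≠ 0 := by
    by_contra hu; push_neg at hu
    exact hL0 (ContinuousLinearMap.ext fun u => by simp [hu u])
  have hu0 : u ≠ 0 := fun h => hu (by simp [h])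
  set v : E2 := ‖u‖⁻¹ • u with hv
  have hvn : ‖v‖ = 1 := by
    rw [hv, norm_smul, norm_inv, norm_norm, inv_mul_cancel₀ (norm_ne_zero_iff.2 hu0)]
  have hLv : L v ≠ 0 := by
    rw [hv, _root_.map_smul]
    simp [hu, norm_ne_zero_iff.2 hu0]
  set a : ℝ := ‖L v‖ with ha
  have ha0 : 0 < a := norm_pos_iff.2 hLv
  set ε : ℝ := a / (2 * (‖L‖ + 1)) with hε
  have hLn : 0 < ‖L‖ + 1 := by positivity
  have hε0 : 0 < ε := by positivity
  have hεle : ε ≤ 1 := by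
    have h1 : a ≤ ‖L‖ := by
      calc a = ‖L v‖ := rfl
      _ ≤ ‖L‖ * ‖v‖ := L.le_opNorm v
      _ = ‖L‖ := by rw [hvn, mul_one]
    rw [hε, div_le_one (by positivity)]
    linarith
  -- little-o estimate
  have hlo := (hdiff.hasFDerivAt.isLittleO).def (show (0:ℝ) < a/8 by positivity)
  rw [Metric.eventually_nhds_iff] at hlo
  obtain ⟨r₁, hr₁0, hr₁⟩ := hlo
  -- the exclusion claim
  have hexcl : ∀ r : ℝ, 0 < r → r < r₁ / 2 → Disjoint Z (closedBall (x + r • v) (ε * r)) := by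
    intro r hr hrr
    rw [Set.disjoint_left]
    intro y hyZ hyB
    have hyB' : ‖y - (x + r • v)‖ ≤ ε * r := by
      rwa [← dist_eq_norm, ← Metric.mem_closedBall]
    have hyx : ‖y - x‖ ≤ 2 * r := by
      have : y - x = (y - (x + r • v)) + r • v := by abel
      rw [this]
      calc ‖(y - (x + r • v)) + r • v‖ ≤ ‖y - (x + r • v)‖ + ‖r • v‖ := norm_add_le _ _
      _ ≤ ε * r + r := by
          rw [norm_smul, hvn, mul_one, Real.norm_eq_abs, abs_of_pos hr]; linarith
      _ ≤ 2 * r := by nlinarith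
    have hdist : dist y x < r₁ := by
      rw [dist_eq_norm]
      calc ‖y - x‖ ≤ 2 * r := hyx
      _ < r₁ := by linarith
    have hest := hr₁ hdist
    rw [hZ y hyZ, hZ x hxZ, sub_zero, zero_sub, norm_neg] at hest
    -- ‖L (y - x)‖ ≤ (a/8) * ‖y - x‖ ≤ a r / 4
    have h1 : ‖L (y - x)‖ ≤ a * r / 4 := by
      calc ‖L (y - x)‖ ≤ a / 8 * ‖y - x‖ := hest
      _ ≤ a / 8 * (2 * r) := by
          apply mul_le_mul_of_nonneg_left hyx (by positivity)
      _ = a * r / 4 := by ring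
    -- lower bound
    have h2 : a * r / 2 ≤ ‖L (y - x)‖ := by
      have hsplit : L (y - x) = r • L v + L (y - (x + r • v)) := by
        rw [← _root_.map_smul, ← map_add]
        congr 1
        abel
      have h3 : ‖L (y - (x + r • v))‖ ≤ ‖L‖ * (ε * r) := by
        calc ‖L (y - (x + r • v))‖ ≤ ‖L‖ * ‖y - (x + r • v)‖ := L.le_opNorm _
        _ ≤ ‖L‖ * (ε * r) := by
            apply mul_le_mul_of_nonneg_left hyB' (norm_nonneg _)
      have h4 : ‖r • L v‖ = r * a := by
        rw [norm_smul, Real.norm_eq_abs, abs_of_pos hr, ha]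
      have h5 : ‖L‖ * (ε * r) ≤ a * r / 2 := by
        rw [hε, show ‖L‖ * (a / (2 * (‖L‖ + 1)) * r) = ‖L‖ * a * r / (2 * (‖L‖ + 1)) from by ring,
          div_le_div_iff₀ (by positivity) (by norm_num : (0:ℝ) < 2)]
        nlinarith [norm_nonneg L, ha0.le, hr.le]
      calc a * r / 2 = r * a - a * r / 2 := by ring
      _ ≤ ‖r • L v‖ - ‖L (y - (x + r • v))‖ := by
          rw [h4]; have := h3.trans h5; linarith
      _ ≤ ‖r • L v + L (y - (x + r • v))‖ := by
          have := norm_add_le (-(r • L v) - L (y - (x + r • v))) (r • L v + L (y - (x + r • v)))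
          have h6 := norm_sub_norm_le (r • L v + L (y - (x + r • v))) (L (y - (x + r • v)))
          calc ‖r • L v‖ - ‖L (y - (x + r • v))‖
              = ‖(r • L v + L (y - (x + r • v))) - L (y - (x + r • v))‖ - ‖L (y - (x + r • v))‖ := by
                congr 2; abel
          _ ≤ ‖r • L v + L (y - (x + r • v))‖ := by
              have := norm_sub_le (r • L v + L (y - (x + r • v))) (L (y - (x + r • v)))
              linarith [this]
      _ = ‖L (y - x)‖ := by rw [← hsplit]
    nlinarith [h1, h2, ha0, hr]
  -- measure-theoretic contradiction
  simp only [Set.indicator_of_mem hxZ, Pi.one_apply] at hx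
  set c1 := volume (ball (0:E2) 1) with hc1
  have hc10 : 0 < c1 := measure_ball_pos _ _ one_pos
  have hc1top : c1 ≠ ⊤ := measure_ball_lt_top.ne
  set κ : ℝ≥0∞ := ENNReal.ofReal (ε ^ 2 / 8) with hκ
  have hκ0 : κ ≠ 0 := by
    simp only [hκ, ne_eq, ENNReal.ofReal_eq_zero, not_le]
    positivity
  have hκ1 : κ ≤ 1 := by
    rw [hκ, show (1:ℝ≥0∞) = ENNReal.ofReal 1 from (ENNReal.ofReal_one).symm]
    apply ENNReal.ofReal_le_ofReal
    nlinarith [hε0.le, hεle]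
  have h1κ : (1:ℝ≥0∞) - κ < 1 :=
    ENNReal.sub_lt_self ENNReal.one_ne_top one_ne_zero hκ0
  have hev1 := hx.eventually_const_lt h1κ
  have hev2 : ∀ᶠ t in 𝓝[>] (0:ℝ), t ∈ Set.Ioo (0:ℝ) r₁ :=
    Ioo_mem_nhdsGT_of_mem ⟨le_refl 0, hr₁0⟩
  obtain ⟨t, ht1, ht0, htr⟩ := (hev1.and hev2).exists
  set r := t / 2 with hrdef
  have hr0 : 0 < r := by positivity
  have hrr : r < r₁ / 2 := by rw [hrdef]; linarith
  have hdisj := hexcl r hr0 hrr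
  set V := volume (closedBall x t) with hV
  set Bm := volume (ball (x + r • v) (ε * r)) with hBm
  have hsub1 : ball (x + r • v) (ε * r) ⊆ closedBall x t := by
    intro y hy
    rw [Metric.mem_ball] at hy
    rw [Metric.mem_closedBall]
    have h1 : dist y (x + r • v) < ε * r := hy
    have h2 : dist (x + r • v) x = r := by
      rw [dist_eq_norm, add_sub_cancel_left, norm_smul, hvn, Real.norm_eq_abs,
        abs_of_pos hr0, mul_one]
    calc dist y x ≤ dist y (x + r • v) + dist (x + r • v) x := dist_triangle _ _ _
    _ ≤ ε * r + r := by rw [h2]; linarith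
    _ ≤ t := by rw [hrdef]; nlinarith [hεle, hr0.le]
  have hdisj2 : Disjoint (Z ∩ closedBall x t) (ball (x + r • v) (ε * r)) :=
    Disjoint.mono Set.inter_subset_left ball_subset_closedBall hdisj
  have hsum : volume (Z ∩ closedBall x t) + Bm ≤ V := by
    rw [hBm, hV, ← measure_union hdisj2 measurableSet_ball]
    exact measure_mono (Set.union_subset Set.inter_subset_right hsub1)
  have hVeq : V = ENNReal.ofReal (t ^ 2) * c1 := by
    rw [hV, Measure.addHaar_closedBall _ _ ht0.le, hc1]
    norm_num [Module.finrank_fin_fun]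
  have hBeq : Bm = ENNReal.ofReal ((ε * r) ^ 2) * c1 := by
    rw [hBm, Measure.addHaar_ball _ _ (by positivity : (0:ℝ) ≤ ε * r), hc1]
    norm_num [Module.finrank_fin_fun]
  have hV0 : V ≠ 0 := by
    rw [hVeq]
    apply mul_ne_zero _ hc10.ne'
    simp only [ne_eq, ENNReal.ofReal_eq_zero, not_le]
    positivity
  have hVtop : V ≠ ⊤ := by
    rw [hVeq]; exact ENNReal.mul_ne_top ENNReal.ofReal_ne_top hc1top
  have hlt : (1 - κ) * V < volume (Z ∩ closedBall x t) := by
    rw [ENNReal.lt_div_iff_mul_lt (Or.inl hV0) (Or.inl hVtop)] at ht1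
    exact ht1
  have hVsplit : V = (1 - κ) * V + κ * V := by
    rw [← add_mul, tsub_add_cancel_of_le hκ1, one_mul]
  have hfin : (1 - κ) * V ≠ ⊤ :=
    ENNReal.mul_ne_top (by simp [ENNReal.sub_ne_top]) hVtop
  have hBκV : Bm < κ * V := by
    have h7 : (1 - κ) * V + Bm < (1 - κ) * V + κ * V := by
      calc (1 - κ) * V + Bm < volume (Z ∩ closedBall x t) + Bm :=
            (ENNReal.add_lt_add_iff_right (by
              rw [hBeq]; exact ENNReal.mul_ne_top ENNReal.ofReal_ne_top hc1top)).2 hlt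
      _ ≤ V := hsum
      _ = (1 - κ) * V + κ * V := hVsplit
    exact (ENNReal.add_lt_add_iff_left hfin).1 h7
  rw [hBeq, hVeq, hκ, ← mul_assoc, ← ENNReal.ofReal_mul (by positivity)] at hBκV
  have := lt_of_mul_lt_mul_right hBκV zero_le
  rw [ENNReal.ofReal_lt_ofReal_iff (by positivity)] at this
  rw [hrdef] at this
  nlinarith [this, hε0, ht0]

/-- 2D cross product -/
def cross (u w : E2) : ℝ := u 0 * w 1 - u 1 * w 0

section Infra

lemma integrable_of_bdd_supp {g : E2 → ℝ} (hg : AEStronglyMeasurable g volume)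
    {C R : ℝ} (hb : ∀ x, |g x| ≤ C) (hs : ∀ x : E2, R < ‖x‖ → g x = 0) :
    Integrable g := by
  have hC : 0 ≤ C := le_trans (abs_nonneg _) (hb 0)
  refine Integrable.mono' (g := fun x => (closedBall (0:E2) R).indicator (fun _ => C) x)
    ?_ hg ?_
  · have h1 : IntegrableOn (fun _ : E2 => C) (closedBall (0:E2) R) volume :=
      integrableOn_const measure_closedBall_lt_top.ne
    exact h1.integrable_indicator measurableSet_closedBall
  · filter_upwards with x
    by_cases hx : x ∈ closedBall (0:E2) R
    · rw [Set.indicator_of_mem hx]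
      exact (Real.norm_eq_abs _) ▸ hb x
    · rw [Set.indicator_of_notMem hx]
      have : R < ‖x‖ := by
        simp only [Metric.mem_closedBall, dist_zero_right, not_le] at hx
        exact hx
      rw [hs x this]
      simp [hC]

variable {φ : E2 → E2} {K : NNReal} {M : ℝ}
  (hK : LipschitzWith K φ) (hM : ∀ x : E2, M < ‖x‖ → φ x = 0)

set_option linter.unusedSectionVars false

include hK hM

lemma phi_hcs : HasCompactSupport φ := by
  apply HasCompactSupport.intro (isCompact_closedBall (0:E2) M)
  intro x hx
  apply hM
  simpa [dist_zero_right] using hx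

lemma phi_comp_integrable (w : E2) (i : Fin 2) :
    Integrable (fun x : E2 => φ (x + w) i) := by
  have h1 : Continuous fun x : E2 => φ (x + w) i :=
    (continuous_apply i).comp (hK.continuous.comp (continuous_id.add continuous_const))
  apply h1.integrable_of_hasCompactSupport
  apply HasCompactSupport.comp_left (g := fun u : E2 => u i) ?_ rfl
  · exact (phi_hcs hK hM).comp_homeomorph (Homeomorph.addRight w)

lemma phi_prod_integrable (w w' : E2) (i i' : Fin 2) :
    Integrable (fun x : E2 => φ (x + w) i * φ (x + w') i') := by
  have h1 : Continuous fun x : E2 => φ (x + w) i :=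
    (continuous_apply i).comp (hK.continuous.comp (continuous_id.add continuous_const))
  have h1' : Continuous fun x : E2 => φ (x + w') i' :=
    (continuous_apply i').comp (hK.continuous.comp (continuous_id.add continuous_const))
  apply (h1.mul h1').integrable_of_hasCompactSupport
  apply HasCompactSupport.mul_right
  apply HasCompactSupport.comp_left (g := fun u : E2 => u i) ?_ rfl
  · exact (phi_hcs hK hM).comp_homeomorph (Homeomorph.addRight w)

lemma phi_cross_integrable (w w' : E2) :
    Integrable (fun x : E2 => cross (φ (x + w)) (φ (x + w'))) := by
  have h := (phi_prod_integrable hK hM w w' 0 1).sub (phi_prod_integrable hK hM w w' 1 0)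
  exact h

end Infra

section CD

variable {φ : E2 → E2} {K : NNReal} {M : ℝ}

set_option linter.unusedSectionVars false

/-- central difference quotients converge to the directional derivative -/
lemma central_diff_tendsto {x : E2} (hx : DifferentiableAt ℝ φ x) (v : E2) :
    Tendsto (fun n : ℕ => (2 * ((n:ℝ)+1)⁻¹)⁻¹ • (φ (x + ((n:ℝ)+1)⁻¹ • v) - φ (x - ((n:ℝ)+1)⁻¹ • v)))
      atTop (𝓝 (fderiv ℝ φ x v)) := by
  set g : ℝ → E2 := fun t => φ (x + t • v) with hg
  have hgd : HasDerivAt g (fderiv ℝ φ x v) 0 := by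
    have hc : HasDerivAt (fun t : ℝ => x + t • v) v 0 := by
      simpa using ((hasDerivAt_id (0:ℝ)).smul_const v).const_add x
    have hφ' : HasFDerivAt φ (fderiv ℝ φ x) (x + (0:ℝ) • v) := by simpa using hx.hasFDerivAt
    have := hφ'.comp_hasDerivAt 0 hc
    simpa [Function.comp_def] using this
  rw [hasDerivAt_iff_tendsto_slope] at hgd
  have hbase : Tendsto (fun n : ℕ => ((n:ℝ)+1)⁻¹) atTop (𝓝 0) :=
    tendsto_one_div_add_atTop_nhds_zero_nat.congr (by intro n; rw [one_div])
  have hδ : Tendsto (fun n : ℕ => ((n:ℝ)+1)⁻¹) atTop (𝓝[≠] 0) := by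
    apply tendsto_nhdsWithin_of_tendsto_nhds_of_eventually_within _ hbase
    filter_upwards with n
    simp only [Set.mem_compl_iff, Set.mem_singleton_iff]
    positivity
  have hδ' : Tendsto (fun n : ℕ => -(((n:ℝ)+1)⁻¹)) atTop (𝓝[≠] 0) := by
    apply tendsto_nhdsWithin_of_tendsto_nhds_of_eventually_within
    · rw [show (0:ℝ) = -0 from by norm_num]
      exact hbase.neg
    · filter_upwards with n
      simp only [Set.mem_compl_iff, Set.mem_singleton_iff, neg_eq_zero]
      positivity
  have h1 := hgd.comp hδ
  have h2 := hgd.comp hδ'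
  have hcomb := (h1.add h2).const_smul (2:ℝ)⁻¹
  have hlim : (2:ℝ)⁻¹ • (fderiv ℝ φ x v + fderiv ℝ φ x v) = fderiv ℝ φ x v := by
    rw [smul_add]
    module
  rw [hlim] at hcomb
  apply hcomb.congr
  intro n
  set δ := ((n:ℝ)+1)⁻¹ with hδdef
  have hδ0 : δ ≠ 0 := by positivity
  simp only [Function.comp_apply, slope_def_module, sub_zero, hg, zero_smul, add_zero,
    neg_smul, inv_neg]
  rw [show x + -(δ • v) = x - δ • v from by abel, mul_inv]
  generalize φ (x + δ • v) = P
  generalize φ (x - δ • v) = Q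
  generalize φ x = S
  simp only [← hδdef]
  module

variable (hK : LipschitzWith K φ) (hM : ∀ x : E2, M < ‖x‖ → φ x = 0)

include hK hM

/-- the integral of each partial derivative vanishes -/
lemma integral_fderiv_apply (v : E2) (i : Fin 2) :
    ∫ x : E2, fderiv ℝ φ x v i = 0 := by
  set δ : ℕ → ℝ := fun n => ((n:ℝ)+1)⁻¹ with hδ
  have hδ0 : ∀ n, 0 < δ n := fun n => by positivity
  have hδ1 : ∀ n, δ n ≤ 1 := fun n => by
    rw [hδ]
    simp only
    rw [inv_le_one_iff₀]
    right
    linarith [Nat.cast_nonneg (α := ℝ) n]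
  set F : ℕ → E2 → ℝ := fun n x => (2 * δ n)⁻¹ * (φ (x + δ n • v) i - φ (x - δ n • v) i)
    with hF
  -- each F n has integral zero
  have hFint : ∀ n, Integrable (F n) := by
    intro n
    apply Integrable.const_mul
    have h1 := phi_comp_integrable hK hM (δ n • v) i
    have h2 := phi_comp_integrable hK hM (-(δ n • v)) i
    have := h1.sub h2
    refine this.congr (Filter.Eventually.of_forall fun x => ?_)
    simp [sub_eq_add_neg]
  have hFzero : ∀ n, ∫ x, F n x = 0 := by
    intro n
    rw [hF]
    simp only
    rw [MeasureTheory.integral_const_mul]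
    have h1 := phi_comp_integrable hK hM (δ n • v) i
    have h2 := phi_comp_integrable hK hM (-(δ n • v)) i
    rw [integral_sub h1 (by simpa [sub_eq_add_neg] using h2)]
    have e1 : ∫ x : E2, φ (x + δ n • v) i = ∫ x : E2, φ x i :=
      integral_add_right_eq_self (μ := volume) (fun y : E2 => φ y i) (δ n • v)
    have e2 : ∫ x : E2, φ (x - δ n • v) i = ∫ x : E2, φ x i := by
      have := integral_add_right_eq_self (μ := volume) (fun y : E2 => φ y i) (-(δ n • v))
      simpa [sub_eq_add_neg] using this
    rw [e1, e2, sub_self, mul_zero]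
  -- dominated convergence
  have hmeas : ∀ n, AEStronglyMeasurable (F n) volume := fun n =>
    ((continuous_const.mul (((continuous_apply i).comp (hK.continuous.comp
      (continuous_id.add continuous_const))).sub ((continuous_apply i).comp
      (hK.continuous.comp (continuous_id.sub continuous_const))))).aestronglyMeasurable)
  set bound : E2 → ℝ := (closedBall (0:E2) (M + ‖v‖ + 1)).indicator (fun _ => (K:ℝ) * ‖v‖)
    with hbound
  have hboundint : Integrable bound := by
    have h1 : IntegrableOn (fun _ : E2 => (K:ℝ) * ‖v‖) (closedBall (0:E2) (M + ‖v‖ + 1)) volume :=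
      integrableOn_const measure_closedBall_lt_top.ne
    exact h1.integrable_indicator measurableSet_closedBall
  have hbd : ∀ n, ∀ᵐ x : E2, ‖F n x‖ ≤ bound x := by
    intro n
    filter_upwards with x
    have hkey : |F n x| ≤ (K:ℝ) * ‖v‖ := by
      have h1 : |φ (x + δ n • v) i - φ (x - δ n • v) i| ≤ ‖φ (x + δ n • v) - φ (x - δ n • v)‖ := by
        have := norm_le_pi_norm (φ (x + δ n • v) - φ (x - δ n • v)) i
        simpa [Real.norm_eq_abs] using this
      have h2 : ‖φ (x + δ n • v) - φ (x - δ n • v)‖ ≤ (K:ℝ) * ‖(x + δ n • v) - (x - δ n • v)‖ := by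
        have := hK.dist_le_mul (x + δ n • v) (x - δ n • v)
        simpa [dist_eq_norm] using this
      have h3 : (x + δ n • v) - (x - δ n • v) = (2 * δ n) • v := by
        rw [two_mul, add_smul]
        abel
      rw [h3, norm_smul, Real.norm_eq_abs, abs_of_pos (by linarith [hδ0 n] : (0:ℝ) < 2 * δ n)] at h2
      have h4 := mul_le_mul_of_nonneg_left (h1.trans h2)
        (by positivity : (0:ℝ) ≤ (2 * δ n)⁻¹)
      calc |(2 * δ n)⁻¹ * (φ (x + δ n • v) i - φ (x - δ n • v) i)|
          = (2 * δ n)⁻¹ * |φ (x + δ n • v) i - φ (x - δ n • v) i| := by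
            rw [abs_mul, abs_inv, abs_of_pos (by linarith [hδ0 n] : (0:ℝ) < 2 * δ n)]
      _ ≤ (2 * δ n)⁻¹ * ((K:ℝ) * (2 * δ n * ‖v‖)) := h4
      _ = (K:ℝ) * ‖v‖ := by
            have := (hδ0 n).ne'
            field_simp
    by_cases hx : x ∈ closedBall (0:E2) (M + ‖v‖ + 1)
    · rw [hbound, Set.indicator_of_mem hx, Real.norm_eq_abs]
      exact hkey
    · rw [hbound, Set.indicator_of_notMem hx, Real.norm_eq_abs]
      have hxn : M + ‖v‖ + 1 < ‖x‖ := by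
        simp only [Metric.mem_closedBall, dist_zero_right, not_le] at hx
        exact hx
      have hz1 : φ (x + δ n • v) = 0 := by
        apply hM
        have : ‖x‖ - ‖δ n • v‖ ≤ ‖x + δ n • v‖ := by
          have h := norm_sub_le (x + δ n • v) (δ n • v)
          have he : (x + δ n • v) - δ n • v = x := by abel
          rw [he] at h
          linarith
        have hv : ‖δ n • v‖ ≤ ‖v‖ := by
          rw [norm_smul, Real.norm_eq_abs, abs_of_pos (hδ0 n)]
          nlinarith [hδ1 n, norm_nonneg v, hδ0 n]
        linarith
      have hz2 : φ (x - δ n • v) = 0 := by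
        apply hM
        have : ‖x‖ - ‖δ n • v‖ ≤ ‖x - δ n • v‖ := norm_sub_norm_le x (δ n • v)
        have hv : ‖δ n • v‖ ≤ ‖v‖ := by
          rw [norm_smul, Real.norm_eq_abs, abs_of_pos (hδ0 n)]
          nlinarith [hδ1 n, norm_nonneg v, hδ0 n]
        linarith
      rw [hF]
      simp [hz1, hz2]
  have hlim : ∀ᵐ x : E2, Tendsto (fun n => F n x) atTop (𝓝 (fderiv ℝ φ x v i)) := by
    filter_upwards [hK.ae_differentiableAt] with x hx
    have h := central_diff_tendsto (φ := φ) hx v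
    have h2 : Tendsto (fun n : ℕ => ((2 * δ n)⁻¹ • (φ (x + δ n • v) - φ (x - δ n • v))) i)
        atTop (𝓝 (fderiv ℝ φ x v i)) := by
      have hcont : Continuous fun u : E2 => u i := continuous_apply i
      exact (hcont.continuousAt).tendsto.comp h
    apply h2.congr
    intro n
    rw [hF]
    simp [Pi.smul_apply, smul_eq_mul]
  have := tendsto_integral_of_dominated_convergence bound hmeas hboundint hbd hlim
  have hzero : Tendsto (fun n => ∫ x, F n x) atTop (𝓝 0) := by
    simp only [hFzero]
    exact tendsto_const_nhds
  exact tendsto_nhds_unique this hzero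

lemma integral_cross_shift (a b : E2) :
    ∫ x : E2, cross (φ (x + a)) (φ (x + b)) = ∫ x : E2, cross (φ x) (φ (x + (b - a))) := by
  have h := integral_add_right_eq_self (μ := volume)
    (fun y : E2 => cross (φ y) (φ (y + (b - a)))) a
  rw [← h]
  congr 1
  funext x
  show cross (φ (x + a)) (φ (x + b)) = cross (φ (x + a)) (φ (x + a + (b - a)))
  congr 2
  abel

lemma integral_cross_neg (w : E2) :
    ∫ x : E2, cross (φ x) (φ (x + -w)) = - ∫ x : E2, cross (φ x) (φ (x + w)) := by
  have h := integral_add_right_eq_self (μ := volume)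
    (fun y : E2 => cross (φ y) (φ (y + -w))) w
  rw [← h]
  have : ∀ x : E2, cross (φ (x + w)) (φ (x + w + -w)) = - cross (φ x) (φ (x + w)) := by
    intro x
    rw [show x + w + -w = x from by abel]
    simp only [cross]
    ring
  rw [show (∫ x : E2, cross (φ (x + w)) (φ (x + w + -w)))
      = ∫ x : E2, - cross (φ x) (φ (x + w)) from by congr 1; funext x; rw [this x]]
  exact integral_neg _

/-- the integral of the Jacobian determinant (as a cross product of the partial derivatives)
vanishes -/
lemma integral_cross_fderiv (v₀ v₁ : E2) :
    ∫ x : E2, cross (fderiv ℝ φ x v₀) (fderiv ℝ φ x v₁) = 0 := by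
  set δ : ℕ → ℝ := fun n => ((n:ℝ)+1)⁻¹ with hδ
  have hδ0 : ∀ n, 0 < δ n := fun n => by positivity
  have hδ1 : ∀ n, δ n ≤ 1 := fun n => by
    rw [hδ]; simp only
    rw [inv_le_one_iff₀]; right; linarith [Nat.cast_nonneg (α := ℝ) n]
  set F : ℕ → E2 → ℝ := fun n x =>
    cross ((2 * δ n)⁻¹ • (φ (x + δ n • v₀) - φ (x - δ n • v₀)))
          ((2 * δ n)⁻¹ • (φ (x + δ n • v₁) - φ (x - δ n • v₁))) with hF
  -- each F n has integral zero
  have hFc : ∀ n x, F n x = ((2 * δ n)⁻¹ * (2 * δ n)⁻¹) *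
      (cross (φ (x + δ n • v₀)) (φ (x + δ n • v₁))
       - cross (φ (x + δ n • v₀)) (φ (x + -(δ n • v₁)))
       - cross (φ (x + -(δ n • v₀))) (φ (x + δ n • v₁))
       + cross (φ (x + -(δ n • v₀))) (φ (x + -(δ n • v₁)))) := by
    intro n x
    simp only [hF]
    rw [show x - δ n • v₀ = x + -(δ n • v₀) from sub_eq_add_neg _ _,
      show x - δ n • v₁ = x + -(δ n • v₁) from sub_eq_add_neg _ _]
    simp only [cross, Pi.smul_apply, Pi.sub_apply, smul_eq_mul]
    ring
  have hFzero : ∀ n, ∫ x, F n x = 0 := by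
    intro n
    have hrw : (fun x => F n x) = fun x => ((2 * δ n)⁻¹ * (2 * δ n)⁻¹) *
      (cross (φ (x + δ n • v₀)) (φ (x + δ n • v₁))
       - cross (φ (x + δ n • v₀)) (φ (x + -(δ n • v₁)))
       - cross (φ (x + -(δ n • v₀))) (φ (x + δ n • v₁))
       + cross (φ (x + -(δ n • v₀))) (φ (x + -(δ n • v₁)))) := funext (hFc n)
    rw [hrw, MeasureTheory.integral_const_mul]
    have i1 : Integrable (fun x : E2 => cross (φ (x + δ n • v₀)) (φ (x + δ n • v₁))) :=
      phi_cross_integrable hK hM (δ n • v₀) (δ n • v₁)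
    have i2 : Integrable (fun x : E2 => cross (φ (x + δ n • v₀)) (φ (x + -(δ n • v₁)))) :=
      phi_cross_integrable hK hM (δ n • v₀) (-(δ n • v₁))
    have i3 : Integrable (fun x : E2 => cross (φ (x + -(δ n • v₀))) (φ (x + δ n • v₁))) :=
      phi_cross_integrable hK hM (-(δ n • v₀)) (δ n • v₁)
    have i4 : Integrable (fun x : E2 => cross (φ (x + -(δ n • v₀))) (φ (x + -(δ n • v₁)))) :=
      phi_cross_integrable hK hM (-(δ n • v₀)) (-(δ n • v₁))
    have i12 : Integrable (fun x : E2 => cross (φ (x + δ n • v₀)) (φ (x + δ n • v₁))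
        - cross (φ (x + δ n • v₀)) (φ (x + -(δ n • v₁)))) := i1.sub i2
    have i123 : Integrable (fun x : E2 => cross (φ (x + δ n • v₀)) (φ (x + δ n • v₁))
        - cross (φ (x + δ n • v₀)) (φ (x + -(δ n • v₁)))
        - cross (φ (x + -(δ n • v₀))) (φ (x + δ n • v₁))) := i12.sub i3
    rw [integral_add i123 i4, integral_sub i12 i3, integral_sub i1 i2]
    set T : E2 → ℝ := fun w => ∫ x : E2, cross (φ x) (φ (x + w)) with hT
    have e1 : ∫ x : E2, cross (φ (x + δ n • v₀)) (φ (x + δ n • v₁))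
        = T (δ n • v₁ - δ n • v₀) := integral_cross_shift hK hM (δ n • v₀) (δ n • v₁)
    have e2 : ∫ x : E2, cross (φ (x + δ n • v₀)) (φ (x + -(δ n • v₁)))
        = - T (δ n • v₁ + δ n • v₀) := by
      rw [integral_cross_shift hK hM (δ n • v₀) (-(δ n • v₁)),
        show -(δ n • v₁) - δ n • v₀ = -(δ n • v₁ + δ n • v₀) from by abel]
      exact integral_cross_neg hK hM _
    have e3 : ∫ x : E2, cross (φ (x + -(δ n • v₀))) (φ (x + δ n • v₁))
        = T (δ n • v₁ + δ n • v₀) := by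
      rw [integral_cross_shift hK hM (-(δ n • v₀)) (δ n • v₁),
        show δ n • v₁ - -(δ n • v₀) = δ n • v₁ + δ n • v₀ from by abel]
    have e4 : ∫ x : E2, cross (φ (x + -(δ n • v₀))) (φ (x + -(δ n • v₁)))
        = - T (δ n • v₁ - δ n • v₀) := by
      rw [integral_cross_shift hK hM (-(δ n • v₀)) (-(δ n • v₁)),
        show -(δ n • v₁) - -(δ n • v₀) = -(δ n • v₁ - δ n • v₀) from by abel]
      exact integral_cross_neg hK hM _
    rw [e1, e2, e3, e4]
    ring
  -- measurability
  have hmeas : ∀ n, AEStronglyMeasurable (F n) volume := by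
    intro n
    have hc : ∀ w : E2, Continuous fun x : E2 => φ (x + w) := fun w =>
      hK.continuous.comp (continuous_id.add continuous_const)
    have hc' : ∀ (w : E2) (i : Fin 2), Continuous fun x : E2 => φ (x + w) i := fun w i =>
      (continuous_apply i).comp (hc w)
    have hcs : ∀ (w : E2) (i : Fin 2), Continuous fun x : E2 => φ (x - w) i := by
      intro w i
      have := hc' (-w) i
      simpa [sub_eq_add_neg] using this
    apply Continuous.aestronglyMeasurable
    apply Continuous.sub <;> apply Continuous.mul <;>
      · apply Continuous.mul continuous_const
        apply Continuous.sub
        all_goals first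
          | exact hc' _ _
          | exact hcs _ _
  -- uniform bound on the scaled central differences
  have hnorm : ∀ (n : ℕ) (x : E2) (v : E2),
      ‖(2 * δ n)⁻¹ • (φ (x + δ n • v) - φ (x - δ n • v))‖ ≤ (K:ℝ) * ‖v‖ := by
    intro n x v
    have hpos : (0:ℝ) < 2 * δ n := by linarith [hδ0 n]
    rw [norm_smul, Real.norm_eq_abs, abs_inv, abs_of_pos hpos]
    have h2 : ‖φ (x + δ n • v) - φ (x - δ n • v)‖ ≤ (K:ℝ) * (2 * δ n * ‖v‖) := by
      have := hK.dist_le_mul (x + δ n • v) (x - δ n • v)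
      rw [dist_eq_norm, dist_eq_norm] at this
      have h3 : (x + δ n • v) - (x - δ n • v) = (2 * δ n) • v := by
        rw [two_mul, add_smul]; abel
      rw [h3, norm_smul, Real.norm_eq_abs, abs_of_pos hpos] at this
      exact this
    have h4 := mul_le_mul_of_nonneg_left h2 (by positivity : (0:ℝ) ≤ (2 * δ n)⁻¹)
    calc (2 * δ n)⁻¹ * ‖φ (x + δ n • v) - φ (x - δ n • v)‖
        ≤ (2 * δ n)⁻¹ * ((K:ℝ) * (2 * δ n * ‖v‖)) := h4
    _ = (K:ℝ) * ‖v‖ := by have := (hδ0 n).ne'; field_simp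
  set C : ℝ := 2 * ((K:ℝ) * ‖v₀‖) * ((K:ℝ) * ‖v₁‖) with hC
  set bound : E2 → ℝ := (closedBall (0:E2) (M + ‖v₀‖ + ‖v₁‖ + 1)).indicator (fun _ => C)
    with hbound
  have hboundint : Integrable bound := by
    have h1 : IntegrableOn (fun _ : E2 => C) (closedBall (0:E2) (M + ‖v₀‖ + ‖v₁‖ + 1)) volume :=
      integrableOn_const measure_closedBall_lt_top.ne
    exact h1.integrable_indicator measurableSet_closedBall
  have hcrossbd : ∀ (u w : E2), |cross u w| ≤ 2 * ‖u‖ * ‖w‖ := by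
    intro u w
    have h0 : ∀ (z : E2) (i : Fin 2), |z i| ≤ ‖z‖ := fun z i => by
      have := norm_le_pi_norm z i
      simpa [Real.norm_eq_abs] using this
    calc |cross u w| ≤ |u 0 * w 1| + |u 1 * w 0| := abs_sub _ _
    _ = |u 0| * |w 1| + |u 1| * |w 0| := by rw [abs_mul, abs_mul]
    _ ≤ ‖u‖ * ‖w‖ + ‖u‖ * ‖w‖ := by
        have := h0 u 0; have := h0 u 1; have := h0 w 0; have := h0 w 1
        have := abs_nonneg (u 0); have := abs_nonneg (u 1)
        have := abs_nonneg (w 0); have := abs_nonneg (w 1)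
        have := norm_nonneg u; have := norm_nonneg w
        nlinarith
    _ = 2 * ‖u‖ * ‖w‖ := by ring
  have hbd : ∀ n, ∀ᵐ x : E2, ‖F n x‖ ≤ bound x := by
    intro n
    filter_upwards with x
    by_cases hx : x ∈ closedBall (0:E2) (M + ‖v₀‖ + ‖v₁‖ + 1)
    · rw [hbound, Set.indicator_of_mem hx, Real.norm_eq_abs]
      calc |F n x| ≤ 2 * ‖(2 * δ n)⁻¹ • (φ (x + δ n • v₀) - φ (x - δ n • v₀))‖
          * ‖(2 * δ n)⁻¹ • (φ (x + δ n • v₁) - φ (x - δ n • v₁))‖ := hcrossbd _ _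
      _ ≤ 2 * ((K:ℝ) * ‖v₀‖) * ((K:ℝ) * ‖v₁‖) := by
          have hb0 := hnorm n x v₀
          have hb1 := hnorm n x v₁
          have hn0 := norm_nonneg ((2 * δ n)⁻¹ • (φ (x + δ n • v₀) - φ (x - δ n • v₀)))
          have hn1 := norm_nonneg ((2 * δ n)⁻¹ • (φ (x + δ n • v₁) - φ (x - δ n • v₁)))
          nlinarith [mul_nonneg (NNReal.coe_nonneg K) (norm_nonneg v₀),
            mul_nonneg (NNReal.coe_nonneg K) (norm_nonneg v₁)]
      _ = C := hC.symm
    · rw [hbound, Set.indicator_of_notMem hx, Real.norm_eq_abs]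
      have hxn : M + ‖v₀‖ + ‖v₁‖ + 1 < ‖x‖ := by
        simp only [Metric.mem_closedBall, dist_zero_right, not_le] at hx
        exact hx
      have hvz : ∀ (v : E2) (s : ℝ), |s| ≤ 1 → ‖v‖ ≤ ‖v₀‖ + ‖v₁‖ → φ (x + s • v) = 0 := by
        intro v s hs hv
        apply hM
        have h := norm_sub_le (x + s • v) (s • v)
        rw [show (x + s • v) - s • v = x from by abel] at h
        have h2 : ‖s • v‖ ≤ ‖v₀‖ + ‖v₁‖ := by
          rw [norm_smul, Real.norm_eq_abs]
          calc |s| * ‖v‖ ≤ 1 * (‖v₀‖ + ‖v₁‖) := mul_le_mul hs hv (norm_nonneg _) zero_le_one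
          _ = ‖v₀‖ + ‖v₁‖ := one_mul _
        linarith
      have habs : |δ n| ≤ 1 := by rw [abs_of_pos (hδ0 n)]; exact hδ1 n
      have habs' : |(-(δ n))| ≤ 1 := by rw [abs_neg]; exact habs
      have hz1 := hvz v₀ (δ n) habs (by linarith [norm_nonneg v₁])
      have hz2 : φ (x - δ n • v₀) = 0 := by
        have := hvz v₀ (-(δ n)) habs' (by linarith [norm_nonneg v₁])
        rwa [neg_smul, ← sub_eq_add_neg] at this
      have hz3 := hvz v₁ (δ n) habs (by linarith [norm_nonneg v₀])
      have hz4 : φ (x - δ n • v₁) = 0 := by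
        have := hvz v₁ (-(δ n)) habs' (by linarith [norm_nonneg v₀])
        rwa [neg_smul, ← sub_eq_add_neg] at this
      simp [hF, hz1, hz2, hz3, hz4, cross]
  have hmeas' : ∀ n, AEStronglyMeasurable (F n) volume := hmeas
  have hlim : ∀ᵐ x : E2, Tendsto (fun n => F n x)
      atTop (𝓝 (cross (fderiv ℝ φ x v₀) (fderiv ℝ φ x v₁))) := by
    filter_upwards [hK.ae_differentiableAt] with x hx
    have h0 := central_diff_tendsto (φ := φ) hx v₀
    have h1 := central_diff_tendsto (φ := φ) hx v₁
    have hc : ∀ (v : E2) (j : Fin 2), Tendsto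
        (fun n : ℕ => ((2 * δ n)⁻¹ • (φ (x + δ n • v) - φ (x - δ n • v))) j) atTop
        (𝓝 (fderiv ℝ φ x v j)) := by
      intro v j
      exact ((continuous_apply j).continuousAt).tendsto.comp (central_diff_tendsto hx v)
    have := (((hc v₀ 0).mul (hc v₁ 1)).sub ((hc v₀ 1).mul (hc v₁ 0)))
    apply this.congr
    intro n
    simp [hF, cross]
  have hdct := tendsto_integral_of_dominated_convergence bound hmeas' hboundint hbd hlim
  have hzero : Tendsto (fun n => ∫ x, F n x) atTop (𝓝 0) := by
    simp only [hFzero]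
    exact tendsto_const_nhds
  exact tendsto_nhds_unique hdct hzero

end CD


section GradMat

lemma gradMat_apply (φ : E2 → E2) (x : E2) (i j : Fin 2) :
    gradMat φ x i j = fderiv ℝ φ x (Pi.single j 1) i := by
  have harg : (fun j' : Fin 2 => if j' = j then (1:ℝ) else 0) = Pi.single j 1 := by
    funext j'
    simp [Pi.single_apply]
  rw [gradMat, LinearMap.toMatrix'_apply]
  rfl

lemma det_gradMat (φ : E2 → E2) (x : E2) :
    (gradMat φ x).det = cross (fderiv ℝ φ x (Pi.single 0 1)) (fderiv ℝ φ x (Pi.single 1 1)) := by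
  rw [Matrix.det_fin_two, gradMat_apply, gradMat_apply, gradMat_apply, gradMat_apply, cross]
  ring

lemma gradMat_measurable (φ : E2 → E2) (i j : Fin 2) :
    Measurable fun x : E2 => gradMat φ x i j := by
  simp only [gradMat_apply]
  exact (measurable_pi_apply i).comp (measurable_fderiv_apply_const (𝕜 := ℝ) (f := φ) (Pi.single j 1 : E2))

lemma gradMat_bound {φ : E2 → E2} {K : NNReal} (hK : LipschitzWith K φ) (x : E2) (i j : Fin 2) :
    |gradMat φ x i j| ≤ (K : ℝ) := by
  rw [gradMat_apply]
  have h1 : |fderiv ℝ φ x (Pi.single j 1) i| ≤ ‖fderiv ℝ φ x (Pi.single j 1)‖ := by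
    have := norm_le_pi_norm (fderiv ℝ φ x (Pi.single j 1)) i
    simpa [Real.norm_eq_abs] using this
  have h2 : ‖fderiv ℝ φ x (Pi.single j 1)‖ ≤ ‖fderiv ℝ φ x‖ * ‖(Pi.single j 1 : E2)‖ :=
    (fderiv ℝ φ x).le_opNorm _
  have h3 : ‖(Pi.single j 1 : E2)‖ ≤ 1 := by
    rw [pi_norm_le_iff_of_nonneg zero_le_one]
    intro j'
    rw [Pi.single_apply]
    split_ifs <;> simp
  have h4 : ‖fderiv ℝ φ x‖ ≤ (K : ℝ) := norm_fderiv_le_of_lipschitz ℝ hK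
  have h5 : (0:ℝ) ≤ ‖fderiv ℝ φ x‖ := norm_nonneg _
  nlinarith [norm_nonneg (Pi.single j 1 : E2)]

lemma gradMat_zero_far {φ : E2 → E2} {M : ℝ} (hM : ∀ y : E2, M < ‖y‖ → φ y = 0)
    (x : E2) (hx : M < ‖x‖) : gradMat φ x = 0 := by
  have hev : φ =ᶠ[𝓝 x] (fun _ => (0 : E2)) := by
    have hball : Metric.ball x (‖x‖ - M) ∈ 𝓝 x := Metric.ball_mem_nhds x (by linarith)
    filter_upwards [hball] with y hy
    apply hM
    rw [Metric.mem_ball, dist_eq_norm] at hy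
    have h := abs_le.1 (abs_norm_sub_norm_le y x)
    linarith [h.1]
  have hfd : fderiv ℝ φ x = fderiv ℝ (fun _ => (0:E2)) x := hev.fderiv_eq
  ext i j
  rw [gradMat_apply, hfd, fderiv_const_apply]
  simp

lemma det_add_expand (A B : Matrix (Fin 2) (Fin 2) ℝ) :
    (A + B).det = A.det + (A 0 0 * B 1 1 + A 1 1 * B 0 0 - A 0 1 * B 1 0 - A 1 0 * B 0 1)
      + B.det := by
  simp only [Matrix.det_fin_two, Matrix.add_apply]
  ring

lemma nB_add_expand (A B : Matrix (Fin 2) (Fin 2) ℝ) :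
    nB (A + B) = nB A + 2 * (A 0 0 * B 0 0 + A 0 1 * B 0 1 + A 1 0 * B 1 0 + A 1 1 * B 1 1)
      + nB B := by
  simp only [nB, Fin.sum_univ_two, Matrix.add_apply]
  ring

lemma psi_continuous : Continuous psi := by
  have h1 : Continuous fun B : Matrix (Fin 2) (Fin 2) ℝ => nB B := by
    simp only [nB, Fin.sum_univ_two]
    fun_prop
  have h2 : Continuous fun B : Matrix (Fin 2) (Fin 2) ℝ => B.det := by
    have he : (fun B : Matrix (Fin 2) (Fin 2) ℝ => B.det)
        = fun B : Matrix (Fin 2) (Fin 2) ℝ => B 0 0 * B 1 1 - B 0 1 * B 1 0 := by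
      funext B
      rw [Matrix.det_fin_two]
    rw [he]
    fun_prop
  have he2 : psi = fun B => nB B + 2 - 2 * Real.sqrt (nB B + 2 * B.det) := funext psi_eq
  rw [he2]
  have : Continuous fun B : Matrix (Fin 2) (Fin 2) ℝ => Real.sqrt (nB B + 2 * B.det) :=
    Real.continuous_sqrt.comp (h1.add (continuous_const.mul h2))
  exact (h1.add continuous_const).sub (continuous_const.mul this)

lemma psi_nonneg (B : Matrix (Fin 2) (Fin 2) ℝ) : 0 ≤ psi B := sq_nonneg _

lemma psi_le (B : Matrix (Fin 2) (Fin 2) ℝ) : psi B ≤ nB B + 2 := by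
  rw [psi_eq]
  have := Real.sqrt_nonneg (nB B + 2 * B.det)
  linarith

end GradMat

section KeyBound

/-- The fundamental lower bound: for any admissible test function, the average of
`psi (A + ∇φ)` dominates the polyconvex minorants evaluated at `A`. -/
lemma key_lower_bound {Ω : Set E2} (hΩo : IsOpen Ω) (hΩb : Bornology.IsBounded Ω)
    (hΩne : Ω.Nonempty) (A : Matrix (Fin 2) (Fin 2) ℝ) {φ : E2 → E2} {K : NNReal}
    (hK : LipschitzWith K φ) (hφ0 : ∀ x ∉ Ω, φ x = 0) :
    (nB A / 2 - A.det ≤ ⨍ x in Ω, psi (A + gradMat φ x)) ∧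
    (∀ l c s : ℝ, 0 ≤ l → c ^ 2 + s ^ 2 = 1 →
      2 * l * ((A 0 0 + A 1 1) * c + (A 1 0 - A 0 1) * s) - 2 * A.det + (1 - 2 * l - l ^ 2)
        ≤ ⨍ x in Ω, psi (A + gradMat φ x)) := by
  classical
  obtain ⟨M, hMsub⟩ := hΩb.subset_closedBall 0
  have hMφ : ∀ x : E2, M < ‖x‖ → φ x = 0 := by
    intro x hx
    apply hφ0
    intro hmem
    have := hMsub hmem
    rw [Metric.mem_closedBall, dist_zero_right] at this
    linarith
  have hμ0 : 0 < volume Ω := hΩo.measure_pos volume hΩne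
  have hμtop : volume Ω < ⊤ := hΩb.measure_lt_top
  set τ : ℝ := (volume Ω).toReal with hτ
  have hτ0 : 0 < τ := ENNReal.toReal_pos hμ0.ne' hμtop.ne
  set G : E2 → Matrix (Fin 2) (Fin 2) ℝ := fun x => gradMat φ x with hG
  have hGm : ∀ i j, Measurable fun x => G x i j := fun i j => gradMat_measurable φ i j
  have hGb : ∀ x i j, |G x i j| ≤ (K:ℝ) := fun x i j => gradMat_bound hK x i j
  have hGfar : ∀ x : E2, M < ‖x‖ → G x = 0 := fun x hx => gradMat_zero_far hMφ x hx
  have hGint : ∀ i j, Integrable (fun x => G x i j) := by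
    intro i j
    apply integrable_of_bdd_supp ((hGm i j).aestronglyMeasurable) (C := (K:ℝ)) (R := M)
    · exact fun x => hGb x i j
    · intro x hx
      rw [hGfar x hx]
      simp
  have hGdetm : Measurable fun x => (G x).det := by
    have he : (fun x => (G x).det) = fun x => G x 0 0 * G x 1 1 - G x 0 1 * G x 1 0 := by
      funext x
      rw [Matrix.det_fin_two]
    rw [he]
    exact ((hGm 0 0).mul (hGm 1 1)).sub ((hGm 0 1).mul (hGm 1 0))
  have hGdetb : ∀ x, |(G x).det| ≤ 2 * (K:ℝ)^2 := by
    intro x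
    rw [Matrix.det_fin_two]
    have h00 := hGb x 0 0; have h01 := hGb x 0 1
    have h10 := hGb x 1 0; have h11 := hGb x 1 1
    have h := abs_sub (G x 0 0 * G x 1 1) (G x 0 1 * G x 1 0)
    rw [abs_mul, abs_mul] at h
    nlinarith [abs_nonneg (G x 0 0), abs_nonneg (G x 0 1), abs_nonneg (G x 1 0),
      abs_nonneg (G x 1 1)]
  have hGdetint : Integrable (fun x => (G x).det) := by
    apply integrable_of_bdd_supp (hGdetm.aestronglyMeasurable) (C := 2*(K:ℝ)^2) (R := M)
    · exact hGdetb
    · intro x hx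
      rw [hGfar x hx]
      simp
  have hcompl0 : ∀ᵐ x, x ∈ Ωᶜ → fderiv ℝ φ x = 0 :=
    fderiv_ae_zero_on_zeroset (hΩo.measurableSet.compl) (fun x hx => hφ0 x hx)
  have hGcompl : ∀ᵐ x, x ∈ Ωᶜ → G x = 0 := by
    filter_upwards [hcompl0] with x hx hxc
    ext i j
    show gradMat φ x i j = (0 : Matrix (Fin 2) (Fin 2) ℝ) i j
    rw [gradMat_apply, hx hxc]
    simp
  have hij_zero : ∀ i j, ∫ x in Ω, G x i j = 0 := by
    intro i j
    have htot : ∫ x : E2, G x i j = 0 := by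
      have h := integral_fderiv_apply hK hMφ (Pi.single j 1) i
      rw [← h]
      congr 1
      all_goals funext x; exact gradMat_apply φ x i j
    have hcompl : ∫ x in Ωᶜ, G x i j = 0 := by
      have he : ∫ x in Ωᶜ, G x i j = ∫ x in Ωᶜ, (0:ℝ) := by
        apply setIntegral_congr_ae (hΩo.measurableSet.compl)
        filter_upwards [hGcompl] with x hx hxc
        rw [hx hxc]
        simp
      rw [he, integral_zero]
    have hsplit := integral_add_compl hΩo.measurableSet (hGint i j)
    rw [htot, hcompl] at hsplit
    linarith
  have hdet_zero : ∫ x in Ω, (G x).det = 0 := by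
    have htot : ∫ x : E2, (G x).det = 0 := by
      have h := integral_cross_fderiv hK hMφ (Pi.single 0 1) (Pi.single 1 1)
      rw [← h]
      congr 1
      all_goals funext x; exact det_gradMat φ x
    have hcompl : ∫ x in Ωᶜ, (G x).det = 0 := by
      have he : ∫ x in Ωᶜ, (G x).det = ∫ x in Ωᶜ, (0:ℝ) := by
        apply setIntegral_congr_ae (hΩo.measurableSet.compl)
        filter_upwards [hGcompl] with x hx hxc
        rw [hx hxc]
        simp
      rw [he, integral_zero]
    have hsplit := integral_add_compl hΩo.measurableSet hGdetint
    rw [htot, hcompl] at hsplit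
    linarith
  have hGiOn : ∀ i j, IntegrableOn (fun x => G x i j) Ω := fun i j => (hGint i j).integrableOn
  have hGdetiOn : IntegrableOn (fun x => (G x).det) Ω := hGdetint.integrableOn
  have hconstOn : ∀ c : ℝ, IntegrableOn (fun _ : E2 => c) Ω := fun c =>
    integrableOn_const hμtop.ne
  -- integrability of linear expressions, and their integral
  have hlinOn : ∀ (m e00 e01 e10 e11 ed : ℝ),
      IntegrableOn (fun x => m + (e00 * G x 0 0 + e01 * G x 0 1 + e10 * G x 1 0
        + e11 * G x 1 1 + ed * (G x).det)) Ω := by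
    intro m e00 e01 e10 e11 ed
    exact (hconstOn m).add (((((((hGiOn 0 0).const_mul e00).add
      ((hGiOn 0 1).const_mul e01)).add ((hGiOn 1 0).const_mul e10)).add
      ((hGiOn 1 1).const_mul e11)).add (hGdetiOn.const_mul ed)))
  have hlin_int : ∀ (m e00 e01 e10 e11 ed : ℝ),
      ∫ x in Ω, (m + (e00 * G x 0 0 + e01 * G x 0 1 + e10 * G x 1 0 + e11 * G x 1 1
        + ed * (G x).det)) = m * τ := by
    intro m e00 e01 e10 e11 ed
    have i1 : IntegrableOn (fun x => e00 * G x 0 0) Ω := (hGiOn 0 0).const_mul e00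
    have i2 : IntegrableOn (fun x => e01 * G x 0 1) Ω := (hGiOn 0 1).const_mul e01
    have i3 : IntegrableOn (fun x => e10 * G x 1 0) Ω := (hGiOn 1 0).const_mul e10
    have i4 : IntegrableOn (fun x => e11 * G x 1 1) Ω := (hGiOn 1 1).const_mul e11
    have i5 : IntegrableOn (fun x => ed * (G x).det) Ω := hGdetiOn.const_mul ed
    have i12 : IntegrableOn (fun x => e00 * G x 0 0 + e01 * G x 0 1) Ω := i1.add i2
    have i123 : IntegrableOn (fun x => e00 * G x 0 0 + e01 * G x 0 1 + e10 * G x 1 0) Ω :=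
      i12.add i3
    have i1234 : IntegrableOn (fun x => e00 * G x 0 0 + e01 * G x 0 1 + e10 * G x 1 0
        + e11 * G x 1 1) Ω := i123.add i4
    have i12345 : IntegrableOn (fun x => e00 * G x 0 0 + e01 * G x 0 1 + e10 * G x 1 0
        + e11 * G x 1 1 + ed * (G x).det) Ω := i1234.add i5
    rw [integral_add (hconstOn m) i12345, integral_add i1234 i5, integral_add i123 i4,
      integral_add i12 i3, integral_add i1 i2]
    rw [MeasureTheory.integral_const_mul, MeasureTheory.integral_const_mul,
      MeasureTheory.integral_const_mul, MeasureTheory.integral_const_mul,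
      MeasureTheory.integral_const_mul]
    rw [hij_zero 0 0, hij_zero 0 1, hij_zero 1 0, hij_zero 1 1, hdet_zero]
    rw [setIntegral_const]
    simp [hτ, smul_eq_mul, mul_comm]
    exact Or.inl rfl
  -- integrability of the psi integrand
  have hnAG : Measurable fun x => nB (A + G x) := by
    have he : (fun x => nB (A + G x)) = fun x => (A 0 0 + G x 0 0)^2 + (A 0 1 + G x 0 1)^2
        + ((A 1 0 + G x 1 0)^2 + (A 1 1 + G x 1 1)^2) := by
      funext x
      simp only [nB, Fin.sum_univ_two, Matrix.add_apply]
    rw [he]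
    exact (((measurable_const.add (hGm 0 0)).pow_const 2).add
      ((measurable_const.add (hGm 0 1)).pow_const 2)).add
      (((measurable_const.add (hGm 1 0)).pow_const 2).add
      ((measurable_const.add (hGm 1 1)).pow_const 2))
  have hdAG : Measurable fun x => (A + G x).det := by
    have he : (fun x => (A + G x).det) = fun x => (A 0 0 + G x 0 0) * (A 1 1 + G x 1 1)
        - (A 0 1 + G x 0 1) * (A 1 0 + G x 1 0) := by
      funext x
      rw [Matrix.det_fin_two]
      simp only [Matrix.add_apply]
    rw [he]
    exact ((measurable_const.add (hGm 0 0)).mul (measurable_const.add (hGm 1 1))).sub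
      ((measurable_const.add (hGm 0 1)).mul (measurable_const.add (hGm 1 0)))
  have hpsim : Measurable fun x => psi (A + G x) := by
    have he : (fun x => psi (A + G x)) = fun x => nB (A + G x) + 2
        - 2 * Real.sqrt (nB (A + G x) + 2 * (A + G x).det) := by
      funext x
      rw [psi_eq]
    rw [he]
    exact (hnAG.add_const 2).sub (measurable_const.mul
      (Real.continuous_sqrt.measurable.comp (hnAG.add (measurable_const.mul hdAG))))
  have hpsiiOn : IntegrableOn (fun x => psi (A + G x)) Ω := by
    apply Integrable.mono' (hconstOn (2 * nB A + 8*(K:ℝ)^2 + 2))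
      (hpsim.aestronglyMeasurable.restrict)
    filter_upwards with x
    rw [Real.norm_eq_abs, abs_of_nonneg (psi_nonneg _)]
    have h1 := psi_le (A + G x)
    have h2 : nB (A + G x) ≤ 2 * nB A + 8 * (K:ℝ)^2 := by
      have h00 := abs_le.1 (hGb x 0 0); have h01 := abs_le.1 (hGb x 0 1)
      have h10 := abs_le.1 (hGb x 1 0); have h11 := abs_le.1 (hGb x 1 1)
      simp only [nB, Fin.sum_univ_two, Matrix.add_apply]
      simp only [nB, Fin.sum_univ_two] at h1 ⊢
      nlinarith [h00.1, h00.2, h01.1, h01.2, h10.1, h10.2, h11.1, h11.2,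
        sq_nonneg (A 0 0 - G x 0 0), sq_nonneg (A 0 1 - G x 0 1),
        sq_nonneg (A 1 0 - G x 1 0), sq_nonneg (A 1 1 - G x 1 1),
        sq_nonneg (A 0 0 + G x 0 0), sq_nonneg (A 0 1 + G x 0 1),
        sq_nonneg (A 1 0 + G x 1 0), sq_nonneg (A 1 1 + G x 1 1)]
    linarith
  -- generic step: from a pointwise lower bound of linear type, deduce the average bound
  have havg : ∀ (m e00 e01 e10 e11 ed : ℝ),
      (∀ x ∈ Ω, m + (e00 * G x 0 0 + e01 * G x 0 1 + e10 * G x 1 0 + e11 * G x 1 1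
        + ed * (G x).det) ≤ psi (A + G x)) →
      m ≤ ⨍ x in Ω, psi (A + gradMat φ x) := by
    intro m e00 e01 e10 e11 ed hpt
    have hmono := setIntegral_mono_on (hlinOn m e00 e01 e10 e11 ed) hpsiiOn
      hΩo.measurableSet hpt
    rw [hlin_int m e00 e01 e10 e11 ed] at hmono
    have havg_eq : (⨍ x in Ω, psi (A + gradMat φ x)) = τ⁻¹ * ∫ x in Ω, psi (A + G x) := by
      rw [setAverage_eq]
      try rw [smul_eq_mul]
      rfl
    rw [havg_eq]
    have := mul_le_mul_of_nonneg_left hmono (inv_nonneg.2 hτ0.le)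
    calc m = τ⁻¹ * (m * τ) := by rw [mul_comm m τ, ← mul_assoc, inv_mul_cancel₀ hτ0.ne', one_mul]
    _ ≤ τ⁻¹ * ∫ x in Ω, psi (A + G x) := this
  constructor
  · -- first minorant : nB A / 2 - det A
    apply havg (nB A / 2 - A.det) (A 0 0 - A 1 1) (A 0 1 + A 1 0) (A 1 0 + A 0 1)
      (A 1 1 - A 0 0) (-1)
    intro x _
    have h := psi_ge_conf (A + G x)
    have hexp : nB (A + G x) / 2 - (A + G x).det
        = (nB A / 2 - A.det) + ((A 0 0 - A 1 1) * G x 0 0 + (A 0 1 + A 1 0) * G x 0 1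
          + (A 1 0 + A 0 1) * G x 1 0 + (A 1 1 - A 0 0) * G x 1 1 + (-1) * (G x).det)
          + nB (G x) / 2 := by
      rw [nB_add_expand, det_add_expand]
      ring
    have hnn := nB_nonneg (G x)
    linarith [hexp ▸ h]
  · -- second minorant family
    intro l c s hl hcs
    apply havg _ (2*l*c - 2*A 1 1) (-(2*l*s) + 2*A 1 0) (2*l*s + 2*A 0 1) (2*l*c - 2*A 0 0) (-2)
    intro x _
    have h := psi_ge_poly (A + G x) hl hcs
    have hexp : 2 * l * (((A + G x) 0 0 + (A + G x) 1 1) * c + ((A + G x) 1 0 - (A + G x) 0 1) * s)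
        - 2 * (A + G x).det + (1 - 2 * l - l ^ 2)
        = (2 * l * ((A 0 0 + A 1 1) * c + (A 1 0 - A 0 1) * s) - 2 * A.det + (1 - 2*l - l^2))
          + ((2*l*c - 2*A 1 1) * G x 0 0 + (-(2*l*s) + 2*A 1 0) * G x 0 1
            + (2*l*s + 2*A 0 1) * G x 1 0 + (2*l*c - 2*A 0 0) * G x 1 1 + (-2) * (G x).det) := by
      rw [det_add_expand]
      simp only [Matrix.add_apply]
      ring
    linarith [hexp ▸ h]

end KeyBound

theorem stmt_2 (Ω : Set (Fin 2 → ℝ)) (hΩo : IsOpen Ω) (hΩb : Bornology.IsBounded Ω)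
    (hΩne : Ω.Nonempty) (A : Matrix (Fin 2) (Fin 2) ℝ)
    (h : psiQC Ω A = 0) : A ∈ SO2 := by
  have hlow : ∀ b : ℝ,
      (∀ (φ : E2 → E2) (K : NNReal), LipschitzWith K φ → (∀ x ∉ Ω, φ x = 0) →
        b ≤ ⨍ x in Ω, psi (A + gradMat φ x)) → b ≤ 0 := by
    intro b hb
    rw [← h]
    unfold psiQC
    apply le_csInf
    · exact ⟨_, (fun _ => (0:E2)), ⟨0, LipschitzWith.const (0:E2)⟩, fun x _ => rfl, rfl⟩
    · rintro r ⟨φ, ⟨K, hK⟩, hφ0, rfl⟩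
      exact hb φ K hK hφ0
  have hlow1 : nB A / 2 - A.det ≤ 0 := by
    apply hlow
    intro φ K hK hφ0
    exact (key_lower_bound hΩo hΩb hΩne A hK hφ0).1
  have hlow2 : ∀ l c s : ℝ, 0 ≤ l → c ^ 2 + s ^ 2 = 1 →
      2 * l * ((A 0 0 + A 1 1) * c + (A 1 0 - A 0 1) * s) - 2 * A.det + (1 - 2 * l - l ^ 2)
        ≤ 0 := by
    intro l c s hl hcs
    apply hlow
    intro φ K hK hφ0
    exact (key_lower_bound hΩo hΩb hΩne A hK hφ0).2 l c s hl hcs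
  -- algebraic conclusion
  have hdet : 1 / 2 ≤ A.det := by
    have := hlow2 0 1 0 le_rfl (by norm_num)
    simp only [mul_zero, zero_mul, mul_one] at this
    linarith
  have hconf : nB A = 2 * A.det := by
    have h1 := two_det_le_nB A
    linarith
  have hsq : (A 0 0 - A 1 1) ^ 2 + (A 0 1 + A 1 0) ^ 2 = 0 := by
    have he : nB A - 2 * A.det = (A 0 0 - A 1 1) ^ 2 + (A 0 1 + A 1 0) ^ 2 := by
      rw [Matrix.det_fin_two]
      simp only [nB, Fin.sum_univ_two]
      ring
    linarith [he ▸ (by linarith : nB A - 2 * A.det = 0)]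
  have h11 : A 1 1 = A 0 0 := by
    nlinarith [sq_nonneg (A 0 0 - A 1 1), sq_nonneg (A 0 1 + A 1 0)]
  have h01 : A 0 1 = -A 1 0 := by
    nlinarith [sq_nonneg (A 0 0 - A 1 1), sq_nonneg (A 0 1 + A 1 0)]
  set a := A 0 0 with ha
  set b := A 1 0 with hb
  have hdet2 : A.det = a ^ 2 + b ^ 2 := by
    rw [Matrix.det_fin_two, h11, h01]
    ring
  set ρ := Real.sqrt (a ^ 2 + b ^ 2) with hρ
  have hρ2 : ρ ^ 2 = a ^ 2 + b ^ 2 := Real.sq_sqrt (by positivity)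
  have hρ0 : 0 ≤ ρ := Real.sqrt_nonneg _
  have hρhalf : 1 / 2 < ρ := by nlinarith [hdet2 ▸ hdet]
  have hl : 0 ≤ 2 * ρ - 1 := by linarith
  have hcs : (a / ρ) ^ 2 + (b / ρ) ^ 2 = 1 := by
    field_simp
    linarith [hρ2]
  have hkey := hlow2 (2 * ρ - 1) (a / ρ) (b / ρ) hl hcs
  have hinner : (A 0 0 + A 1 1) * (a / ρ) + (A 1 0 - A 0 1) * (b / ρ) = 2 * ρ := by
    rw [h11, h01, ← ha, ← hb]
    field_simp
    linarith [hρ2]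
  rw [hinner, hdet2, ← hρ2] at hkey
  have hρ1 : ρ = 1 := by nlinarith [sq_nonneg (ρ - 1)]
  apply mem_SO2_iff.2
  exact ⟨a, b, by nlinarith [hρ2], rfl, h01, rfl, h11⟩
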